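/- Let (H₁, D₁), (H₂, D₂) be finite-dimensional inner product spaces with positive semidefinite symmetric forms, eigenvalue lists λⱼ(Dᵢ), linear maps Q₁ : H₁ → H₂, Q₂ : H₂ → H₁, l ≤ min{dim H₁, dim H₂}, and E₁, E₂ defined as the Rayleigh quotient defects on the spans of the first l eigenvectors (as in the two-sided eigenvalue comparison lemma). Fix a > 0 and let P : H₂ → H₂ be the orthogonal projection onto the span of eigenvectors of D₂ with eigenvalues in [0, λ_l(D₁) + a]. Then for any f in the span of the first l eigenvectors of D₁: ‖(1−P) Q₁ f‖₂² ≤ (l/a)((E₁)₊ + E₂)‖Q₁ f‖₂², and D₂((1−P)Q₁f, (1−P)Q₁f) ≤ ((λ_l(D₁)+a)/a) · l · ((E₁)₊ + E₂) · ‖Q₁f‖₂², where (E₁)₊ := max{E₁, 0}. -/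

import Mathlib

open Finset
set_option maxHeartbeats 1600000

section Helpers
variable {H : Type*} [NormedAddCommGroup H] [InnerProductSpace ℝ H]



variable {H : Type*} [NormedAddCommGroup H] [InnerProductSpace ℝ H]

lemma bilin_expand_left {n : ℕ} (D : H →ₗ[ℝ] H →ₗ[ℝ] ℝ) (c : Fin n → ℝ) (b : Fin n → H)
    (v : H) : D (∑ i, c i • b i) v = ∑ i, c i * D (b i) v := by
  rw [map_sum, LinearMap.sum_apply]
  exact Finset.sum_congr rfl fun i _ => by rw [map_smul, LinearMap.smul_apply, smul_eq_mul]

lemma quad_expand {n : ℕ} (b : OrthonormalBasis (Fin n) ℝ H) (D : H →ₗ[ℝ] H →ₗ[ℝ] ℝ)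
    (lam : Fin n → ℝ) (heig : ∀ i v, D (b i) v = lam i * (inner ℝ (b i) v : ℝ)) (v : H) :
    D v v = ∑ i, lam i * (inner ℝ (b i) v : ℝ) ^ 2 := by
  have hv := b.sum_repr' v
  calc D v v = D (∑ i, (inner ℝ (b i) v : ℝ) • b i) v := by rw [hv]
    _ = ∑ i, (inner ℝ (b i) v : ℝ) * D (b i) v := bilin_expand_left D _ _ v
    _ = ∑ i, lam i * (inner ℝ (b i) v : ℝ) ^ 2 := by
        refine Finset.sum_congr rfl fun i _ => ?_
        rw [heig]; ring

lemma norm_expand {n : ℕ} (b : OrthonormalBasis (Fin n) ℝ H) (v : H) :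
    ‖v‖ ^ 2 = ∑ i, (inner ℝ (b i) v : ℝ) ^ 2 := by
  have h := b.sum_inner_mul_inner v v
  rw [real_inner_self_eq_norm_sq] at h
  rw [← h]
  refine Finset.sum_congr rfl fun i _ => ?_
  rw [real_inner_comm v (b i)]
  ring

lemma coord_zero_of_mem_span {ι : Type*} {b : ι → H} (hb : Orthonormal ℝ b) (s : Set ι)
    {x : H} (hx : x ∈ Submodule.span ℝ (b '' s)) {i : ι} (hi : i ∉ s) :
    (inner ℝ (b i) x : ℝ) = 0 := by
  induction hx using Submodule.span_induction with
  | mem y hy =>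
    obtain ⟨j, hj, rfl⟩ := hy
    exact hb.2 (fun h => hi (h ▸ hj))
  | zero => exact inner_zero_right _
  | add y z _ _ hy hz => rw [inner_add_right, hy, hz]; ring
  | smul r y _ hy => rw [real_inner_smul_right, hy]; ring

lemma trace_indep {n : ℕ} {F : Submodule ℝ H} (B : H →ₗ[ℝ] H →ₗ[ℝ] ℝ)
    (b c : OrthonormalBasis (Fin n) ℝ F) :
    ∑ j, B (b j) (b j) = ∑ j, B (c j) (c j) := by
  have hexp : ∀ j : Fin n, (b j : H) = ∑ k, (inner ℝ (c k : H) (b j : H) : ℝ) • (c k : H) := by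
    intro j
    have h := c.sum_repr' (b j)
    have := congrArg (F.subtype) h
    simpa [map_sum, Submodule.coe_inner] using this.symm
  have key : ∀ j, B (b j) (b j)
      = ∑ k, ∑ m, (inner ℝ (c k : H) (b j : H) : ℝ) * ((inner ℝ (c m : H) (b j : H) : ℝ)
          * B (c k) (c m)) := by
    intro j
    calc B (b j) (b j) = B (∑ k, (inner ℝ (c k : H) (b j : H) : ℝ) • (c k : H)) (b j) := by
          rw [← hexp j]
      _ = ∑ k, (inner ℝ (c k : H) (b j : H) : ℝ) * B (c k) (b j) := bilin_expand_left B _ _ _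
      _ = _ := by
          refine Finset.sum_congr rfl fun k _ => ?_
          have hh : B (c k) (b j) = ∑ m, (inner ℝ (c m : H) (b j : H) : ℝ) * B (c k) (c m) := by
            calc B (c k) (b j) = B (c k) (∑ m, (inner ℝ (c m : H) (b j : H) : ℝ) • (c m : H)) := by
                  rw [← hexp j]
              _ = ∑ m, (inner ℝ (c m : H) (b j : H) : ℝ) * B (c k) (c m) := by
                  rw [map_sum]
                  exact Finset.sum_congr rfl fun m _ => by rw [map_smul, smul_eq_mul]
          rw [hh, Finset.mul_sum]
  have hpar : ∀ k m : Fin n, (∑ j, (inner ℝ (c k : H) (b j : H) : ℝ)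
      * (inner ℝ (c m : H) (b j : H) : ℝ)) = if k = m then 1 else 0 := by
    intro k m
    have h := b.sum_inner_mul_inner (c k) (c m)
    have h2 : (inner ℝ (c k) (c m) : ℝ) = if k = m then 1 else 0 :=
      orthonormal_iff_ite.mp c.orthonormal k m
    rw [h2] at h
    rw [← h]
    refine Finset.sum_congr rfl fun j _ => ?_
    rw [Submodule.coe_inner, Submodule.coe_inner, real_inner_comm (c m : H)]
  calc ∑ j, B (b j) (b j)
      = ∑ j, ∑ k, ∑ m, (inner ℝ (c k : H) (b j : H) : ℝ) * ((inner ℝ (c m : H) (b j : H) : ℝ)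
          * B (c k) (c m)) := Finset.sum_congr rfl fun j _ => key j
    _ = ∑ k, ∑ m, ∑ j, (inner ℝ (c k : H) (b j : H) : ℝ) * ((inner ℝ (c m : H) (b j : H) : ℝ)
          * B (c k) (c m)) := by
        rw [Finset.sum_comm]
        exact Finset.sum_congr rfl fun k _ => Finset.sum_comm
    _ = ∑ k, ∑ m, (∑ j, (inner ℝ (c k : H) (b j : H) : ℝ) * (inner ℝ (c m : H) (b j : H) : ℝ))
          * B (c k) (c m) := by
        refine Finset.sum_congr rfl fun k _ => Finset.sum_congr rfl fun m _ => ?_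
        rw [Finset.sum_mul]
        exact Finset.sum_congr rfl fun j _ => by ring
    _ = ∑ k, B (c k) (c k) := by
        refine Finset.sum_congr rfl fun k _ => ?_
        rw [Finset.sum_congr rfl fun m _ => by rw [hpar k m]]
        simp




lemma bilin_expand_left' {ι : Type*} (D : H →ₗ[ℝ] H →ₗ[ℝ] ℝ) (s : Finset ι) (c : ι → ℝ)
    (b : ι → H) (v : H) : D (∑ i ∈ s, c i • b i) v = ∑ i ∈ s, c i * D (b i) v := by
  rw [map_sum, LinearMap.sum_apply]
  exact Finset.sum_congr rfl fun i _ => by rw [map_smul, LinearMap.smul_apply, smul_eq_mul]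

lemma inner_ortho_sum {ι : Type*} [DecidableEq ι] {b : ι → H} (hb : Orthonormal ℝ b)
    (s : Finset ι) (c : ι → ℝ) {i : ι} (hi : i ∈ s) :
    (inner ℝ (b i) (∑ j ∈ s, c j • b j) : ℝ) = c i := by
  rw [inner_sum]
  rw [Finset.sum_congr rfl fun j _ => by
    rw [real_inner_smul_right, orthonormal_iff_ite.mp hb i j]]
  simp [hi]

end Helpers

section Eig
variable {H₁ H₂ : Type*}
    [NormedAddCommGroup H₁] [InnerProductSpace ℝ H₁] [FiniteDimensional ℝ H₁]
    [NormedAddCommGroup H₂] [InnerProductSpace ℝ H₂] [FiniteDimensional ℝ H₂]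

lemma eig_compare {n₁ n₂ : ℕ} (hn₁ : Module.finrank ℝ H₁ = n₁)
    (D₁ : H₁ →ₗ[ℝ] H₁ →ₗ[ℝ] ℝ) (D₂ : H₂ →ₗ[ℝ] H₂ →ₗ[ℝ] ℝ)
    (f : OrthonormalBasis (Fin n₁) ℝ H₁) (u : OrthonormalBasis (Fin n₂) ℝ H₂)
    (lam1 : Fin n₁ → ℝ) (lam2 : Fin n₂ → ℝ) (hmono₁ : Monotone lam1) (hmono₂ : Monotone lam2)
    (heig₁ : ∀ i v, D₁ (f i) v = lam1 i * (inner ℝ (f i) v : ℝ))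
    (heig₂ : ∀ i v, D₂ (u i) v = lam2 i * (inner ℝ (u i) v : ℝ))
    (l : ℕ) (hln₁ : l ≤ n₁) (hln₂ : l ≤ n₂)
    (Q₂ : H₂ →ₗ[ℝ] H₁) (E₁ : ℝ)
    (hinj₂ : ∀ v ∈ Submodule.span ℝ ((fun i => u i) '' {i : Fin n₂ | (i : ℕ) < l}),
      Q₂ v = 0 → v = 0)
    (hE₁ : ∀ v ∈ Submodule.span ℝ ((fun i => u i) '' {i : Fin n₂ | (i : ℕ) < l}), v ≠ 0 →
      D₁ (Q₂ v) (Q₂ v) / ‖Q₂ v‖ ^ 2 - D₂ v v / ‖v‖ ^ 2 ≤ E₁)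
    (j : ℕ) (hj : j < l) :
    lam1 ⟨j, hj.trans_le hln₁⟩ ≤ lam2 ⟨j, hj.trans_le hln₂⟩ + E₁ := by
  have hjn₁ : j < n₁ := hj.trans_le hln₁
  have hjn₂ : j < n₂ := hj.trans_le hln₂
  -- U = span of first j+1 eigenvectors of D₂
  set v2 : Fin (j + 1) → H₂ := fun k => u (Fin.castLE (by omega) k) with hv2
  have hv2on : Orthonormal ℝ v2 := u.orthonormal.comp _ (Fin.castLE_injective _)
  have hrange2 : Set.range v2 = (fun i => u i) '' {i : Fin n₂ | (i : ℕ) ≤ j} := by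
    ext x
    constructor
    · rintro ⟨k, rfl⟩
      exact ⟨Fin.castLE (by omega) k, by simpa using Nat.lt_succ_iff.mp k.2, rfl⟩
    · rintro ⟨i, hi, rfl⟩
      exact ⟨⟨i.1, Nat.lt_succ_of_le hi⟩, by simp [hv2, Fin.castLE]⟩
  set U : Submodule ℝ H₂ := Submodule.span ℝ (Set.range v2) with hU
  have hUrank : Module.finrank ℝ U = j + 1 := by
    rw [hU, finrank_span_eq_card hv2on.linearIndependent, Fintype.card_fin]
  have hUle : U ≤ Submodule.span ℝ ((fun i => u i) '' {i : Fin n₂ | (i : ℕ) < l}) := by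
    rw [hU]
    apply Submodule.span_le.mpr
    rintro x ⟨k, rfl⟩
    exact Submodule.subset_span ⟨Fin.castLE (by omega) k, by
      simpa using lt_of_le_of_lt (Nat.lt_succ_iff.mp k.2) hj, rfl⟩
  set q : U →ₗ[ℝ] H₁ := Q₂ ∘ₗ U.subtype with hq
  have hker : LinearMap.ker q = ⊥ := by
    rw [LinearMap.ker_eq_bot']
    intro x hx
    have : (x : H₂) = 0 := hinj₂ x (hUle x.2) hx
    exact Subtype.ext this
  have hRrank : Module.finrank ℝ (LinearMap.range q) = j + 1 := by
    have h := LinearMap.finrank_range_add_finrank_ker q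
    rw [hker, finrank_bot, add_zero, hUrank] at h
    exact h
  -- W = span of eigenvectors of D₁ with index ≥ j
  set v3 : Fin (n₁ - j) → H₁ := fun k => f ⟨j + k.1, by omega⟩ with hv3
  have hv3on : Orthonormal ℝ v3 := by
    have := f.orthonormal.comp (fun k : Fin (n₁ - j) => (⟨j + k.1, by omega⟩ : Fin n₁)) (by
      intro a b hab
      have : j + a.1 = j + b.1 := congrArg Fin.val hab
      exact Fin.ext (by omega))
    simpa [Function.comp_def, hv3] using this
  have hrange3 : Set.range v3 = (fun i => f i) '' {i : Fin n₁ | j ≤ (i : ℕ)} := by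
    ext x
    constructor
    · rintro ⟨k, rfl⟩
      exact ⟨⟨j + k.1, by omega⟩, by simp [Set.mem_setOf_eq], rfl⟩
    · rintro ⟨i, hi, rfl⟩
      refine ⟨⟨i.1 - j, by omega⟩, ?_⟩
      simp only [hv3]
      congr 1
      exact Fin.ext (by simp at hi ⊢; omega)
  set W : Submodule ℝ H₁ := Submodule.span ℝ ((fun i => f i) '' {i : Fin n₁ | j ≤ (i : ℕ)})
    with hW
  have hWrank : Module.finrank ℝ W = n₁ - j := by
    rw [hW, ← hrange3, finrank_span_eq_card hv3on.linearIndependent, Fintype.card_fin]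
  -- intersection is nonzero
  have hsum := Submodule.finrank_sup_add_finrank_inf_eq (LinearMap.range q) W
  have hsuple : Module.finrank ℝ ((LinearMap.range q) ⊔ W : Submodule ℝ H₁) ≤ n₁ := by
    rw [← hn₁]; exact Submodule.finrank_le _
  have hinf : 1 ≤ Module.finrank ℝ ((LinearMap.range q) ⊓ W : Submodule ℝ H₁) := by omega
  have hne : ((LinearMap.range q) ⊓ W : Submodule ℝ H₁) ≠ ⊥ := by
    intro h
    rw [h] at hinf
    simp [finrank_bot] at hinf
  obtain ⟨x, hxmem, hx0⟩ := Submodule.exists_mem_ne_zero_of_ne_bot hne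
  obtain ⟨hxR, hxW⟩ := hxmem
  obtain ⟨v, hvx⟩ := hxR
  have hvxQ : Q₂ (v : H₂) = x := hvx
  have hvv0 : (v : H₂) ≠ 0 := by
    intro h
    apply hx0
    rw [← hvxQ, h, map_zero]
  have hnx : (0:ℝ) < ‖x‖ ^ 2 := pow_pos (norm_pos_iff.mpr hx0) 2
  have hnv : (0:ℝ) < ‖(v : H₂)‖ ^ 2 := pow_pos (norm_pos_iff.mpr hvv0) 2
  -- Rayleigh bounds
  have hD2 : D₂ (v : H₂) (v : H₂) ≤ lam2 ⟨j, hjn₂⟩ * ‖(v : H₂)‖ ^ 2 := by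
    rw [quad_expand u D₂ lam2 heig₂, norm_expand u, Finset.mul_sum]
    refine Finset.sum_le_sum fun i _ => ?_
    by_cases hij : (i : ℕ) ≤ j
    · have : lam2 i ≤ lam2 ⟨j, hjn₂⟩ := hmono₂ (by exact hij)
      nlinarith [sq_nonneg (inner ℝ (u i) (v : H₂) : ℝ)]
    · have hc : (inner ℝ (u i) (v : H₂) : ℝ) = 0 := by
        refine coord_zero_of_mem_span u.orthonormal {i : Fin n₂ | (i : ℕ) ≤ j} ?_ hij
        rw [← hrange2]
        exact v.2
      rw [hc]
      simp
  have hD1 : lam1 ⟨j, hjn₁⟩ * ‖x‖ ^ 2 ≤ D₁ x x := by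
    rw [quad_expand f D₁ lam1 heig₁, norm_expand f, Finset.mul_sum]
    refine Finset.sum_le_sum fun i _ => ?_
    by_cases hij : j ≤ (i : ℕ)
    · have : lam1 ⟨j, hjn₁⟩ ≤ lam1 i := hmono₁ (by exact hij)
      nlinarith [sq_nonneg (inner ℝ (f i) x : ℝ)]
    · have hc : (inner ℝ (f i) x : ℝ) = 0 :=
        coord_zero_of_mem_span f.orthonormal {i : Fin n₁ | j ≤ (i : ℕ)} hxW hij
      rw [hc]
      simp
  have hE := hE₁ (v : H₂) (hUle v.2) hvv0
  rw [hvxQ] at hE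
  have h1 : lam1 ⟨j, hjn₁⟩ ≤ D₁ x x / ‖x‖ ^ 2 := by
    rw [le_div_iff₀ hnx]
    exact hD1
  have h2 : D₂ (v : H₂) (v : H₂) / ‖(v : H₂)‖ ^ 2 ≤ lam2 ⟨j, hjn₂⟩ := by
    rw [div_le_iff₀ hnv]
    exact hD2
  linarith


end Eig

/-- **Projection estimate for transplanted eigenvectors.**
In the setting of the two-sided eigenvalue comparison (forms `D₁, D₂ ≥ 0` with orthonormal
eigenbases `f`, `u` and nondecreasing eigenvalues `lam1`, `lam2`, maps `Q₁`, `Q₂`, defect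
bounds `E₁`, `E₂` on the spans of the first `l` eigenvectors), fix `a > 0` and let `P` be
the orthogonal projection onto the span of eigenvectors of `D₂` with eigenvalue
`≤ λ_l(D₁) + a`.  Then for every `g` in the span of the first `l` eigenvectors of `D₁`:
`‖(1−P)Q₁g‖² ≤ (l/a)((E₁)₊ + E₂)‖Q₁g‖²` and
`D₂((1−P)Q₁g, (1−P)Q₁g) ≤ ((λ_l(D₁)+a)/a)·l·((E₁)₊ + E₂)·‖Q₁g‖²`. -/
theorem stmt8 {H₁ H₂ : Type*}
    [NormedAddCommGroup H₁] [InnerProductSpace ℝ H₁] [FiniteDimensional ℝ H₁]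
    [NormedAddCommGroup H₂] [InnerProductSpace ℝ H₂] [FiniteDimensional ℝ H₂]
    (n₁ n₂ : ℕ) (hn₁ : Module.finrank ℝ H₁ = n₁) (hn₂ : Module.finrank ℝ H₂ = n₂)
    (D₁ : H₁ →ₗ[ℝ] H₁ →ₗ[ℝ] ℝ) (D₂ : H₂ →ₗ[ℝ] H₂ →ₗ[ℝ] ℝ)
    (hsymm₁ : ∀ u v, D₁ u v = D₁ v u) (hsymm₂ : ∀ u v, D₂ u v = D₂ v u)
    (hpsd₁ : ∀ u, 0 ≤ D₁ u u) (hpsd₂ : ∀ u, 0 ≤ D₂ u u)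
    (f : OrthonormalBasis (Fin n₁) ℝ H₁) (u : OrthonormalBasis (Fin n₂) ℝ H₂)
    (lam1 : Fin n₁ → ℝ) (lam2 : Fin n₂ → ℝ) (hmono₁ : Monotone lam1) (hmono₂ : Monotone lam2)
    (heig₁ : ∀ i v, D₁ (f i) v = lam1 i * (inner ℝ (f i) v : ℝ))
    (heig₂ : ∀ i v, D₂ (u i) v = lam2 i * (inner ℝ (u i) v : ℝ))
    (l : ℕ) (hl1 : 1 ≤ l) (hln₁ : l ≤ n₁) (hln₂ : l ≤ n₂)
    (Q₁ : H₁ →ₗ[ℝ] H₂) (Q₂ : H₂ →ₗ[ℝ] H₁) (E₁ E₂ : ℝ)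
    (hinj₁ : ∀ g ∈ Submodule.span ℝ ((fun i => f i) '' {i : Fin n₁ | (i : ℕ) < l}),
      Q₁ g = 0 → g = 0)
    (hinj₂ : ∀ v ∈ Submodule.span ℝ ((fun i => u i) '' {i : Fin n₂ | (i : ℕ) < l}),
      Q₂ v = 0 → v = 0)
    (hE₁ : ∀ v ∈ Submodule.span ℝ ((fun i => u i) '' {i : Fin n₂ | (i : ℕ) < l}), v ≠ 0 →
      D₁ (Q₂ v) (Q₂ v) / ‖Q₂ v‖ ^ 2 - D₂ v v / ‖v‖ ^ 2 ≤ E₁)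
    (hE₂ : ∀ g ∈ Submodule.span ℝ ((fun i => f i) '' {i : Fin n₁ | (i : ℕ) < l}), g ≠ 0 →
      D₂ (Q₁ g) (Q₁ g) / ‖Q₁ g‖ ^ 2 - D₁ g g / ‖g‖ ^ 2 ≤ E₂)
    (a : ℝ) (ha : 0 < a) (P : H₂ → H₂)
    (hP : ∀ v, P v = ∑ i ∈ Finset.univ.filter
        (fun i => lam2 i ≤ lam1 ⟨l - 1, by omega⟩ + a),
      (inner ℝ (u i) v : ℝ) • u i) :
    ∀ g ∈ Submodule.span ℝ ((fun i => f i) '' {i : Fin n₁ | (i : ℕ) < l}),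
      ‖Q₁ g - P (Q₁ g)‖ ^ 2 ≤ (l : ℝ) / a * (max E₁ 0 + E₂) * ‖Q₁ g‖ ^ 2 ∧
      D₂ (Q₁ g - P (Q₁ g)) (Q₁ g - P (Q₁ g)) ≤
        (lam1 ⟨l - 1, by omega⟩ + a) / a * l * (max E₁ 0 + E₂) * ‖Q₁ g‖ ^ 2 := by
  intro g hg
  classical
  have hlpn : l - 1 < n₁ := by omega
  have hlpn2 : l - 1 < n₂ := by omega
  by_cases hg0 : g = 0
  · subst hg0
    have hP0 : P 0 = 0 := by rw [hP]; simp
    rw [map_zero, hP0]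
    norm_num
  have hw0 : Q₁ g ≠ 0 := fun h => hg0 (hinj₁ g hg h)
  set w : H₂ := Q₁ g with hwdef
  set c : Fin n₂ → ℝ := fun i => (inner ℝ (u i) w : ℝ) with hc
  set Bad : Finset (Fin n₂) :=
    univ.filter (fun i => ¬ (lam2 i ≤ lam1 ⟨l - 1, hlpn⟩ + a)) with hBad
  have hwP : w - P w = ∑ i ∈ Bad, c i • u i := by
    rw [hP w]
    have husum := u.sum_repr' w
    have hsplit := Finset.sum_filter_add_sum_filter_not univ
      (fun i => lam2 i ≤ lam1 ⟨l - 1, hlpn⟩ + a) (fun i => c i • u i)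
    calc w - ∑ i ∈ univ.filter (fun i => lam2 i ≤ lam1 ⟨l - 1, hlpn⟩ + a),
          (inner ℝ (u i) w : ℝ) • u i
        = (∑ i, c i • u i)
          - ∑ i ∈ univ.filter (fun i => lam2 i ≤ lam1 ⟨l - 1, hlpn⟩ + a), c i • u i := by
          rw [husum]
      _ = ∑ i ∈ Bad, c i • u i := by rw [← hsplit]; abel
  have hBnorm : ‖w - P w‖ ^ 2 = ∑ i ∈ Bad, c i ^ 2 := by
    rw [hwP, ← real_inner_self_eq_norm_sq, Orthonormal.inner_sum u.orthonormal c c Bad]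
    exact Finset.sum_congr rfl fun i _ => by simp [sq]
  have hBD : D₂ (w - P w) (w - P w) = ∑ i ∈ Bad, lam2 i * c i ^ 2 := by
    rw [hwP, bilin_expand_left' D₂ Bad c u]
    refine Finset.sum_congr rfl fun i hi => ?_
    rw [heig₂, inner_ortho_sum u.orthonormal Bad c hi]
    ring
  have key : ∑ i ∈ Bad, (lam2 i - lam1 ⟨l - 1, hlpn⟩) * c i ^ 2
      ≤ (l : ℝ) * (max E₁ 0 + E₂) * ‖w‖ ^ 2 := by
    set Fsub : Submodule ℝ H₁ :=
      Submodule.span ℝ ((fun i => f i) '' {i : Fin n₁ | (i : ℕ) < l}) with hFsub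
    have hv1on : Orthonormal ℝ (fun k : Fin l => f (Fin.castLE hln₁ k)) :=
      f.orthonormal.comp _ (Fin.castLE_injective _)
    have hrange1 : Set.range (fun k : Fin l => f (Fin.castLE hln₁ k))
        = (fun i => f i) '' {i : Fin n₁ | (i : ℕ) < l} := by
      ext x
      constructor
      · rintro ⟨k, rfl⟩
        exact ⟨Fin.castLE hln₁ k, by simpa using k.2, rfl⟩
      · rintro ⟨i, hi, rfl⟩
        exact ⟨⟨i.1, by simpa using hi⟩, rfl⟩
    have hFrank : Module.finrank ℝ Fsub = l := by
      rw [hFsub, ← hrange1, finrank_span_eq_card hv1on.linearIndependent, Fintype.card_fin]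
    set A : Fsub →ₗ[ℝ] H₂ := Q₁ ∘ₗ Fsub.subtype with hAdef
    have hT : ((LinearMap.adjoint A) ∘ₗ A).IsSymmetric := by
      intro x y
      show (inner ℝ ((LinearMap.adjoint A) (A x)) y : ℝ)
        = inner ℝ x ((LinearMap.adjoint A) (A y))
      rw [LinearMap.adjoint_inner_left, LinearMap.adjoint_inner_right]
    set bb := hT.eigenvectorBasis hFrank with hbbdef
    set sv : Fin l → ℝ := hT.eigenvalues hFrank with hsv
    have hbb : ∀ k, ((LinearMap.adjoint A) ∘ₗ A) (bb k) = sv k • bb k := fun k =>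
      hT.apply_eigenvectorBasis hFrank k
    have hAb : ∀ k m, (inner ℝ (A (bb k)) (A (bb m)) : ℝ) = if k = m then sv k else 0 := by
      intro k m
      have h1 := LinearMap.adjoint_inner_left A (bb m) (A (bb k))
      have h2 : ((LinearMap.adjoint A) (A (bb k))) = sv k • bb k := hbb k
      rw [h2] at h1
      rw [← h1, real_inner_smul_left, orthonormal_iff_ite.mp bb.orthonormal k m]
      by_cases hkm : k = m
      · subst hkm
        simp
      · simp [hkm]
    have hAbd : ∀ k, (inner ℝ (A (bb k)) (A (bb k)) : ℝ) = sv k := by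
      intro k
      rw [hAb k k]
      simp
    have hbbnorm : ∀ k, ‖(bb k : H₁)‖ = 1 := fun k => bb.orthonormal.1 k
    have hbbne : ∀ k, (bb k : H₁) ≠ 0 := by
      intro k h
      have := hbbnorm k
      rw [h, norm_zero] at this
      norm_num at this
    have hmem : ∀ k, ((bb k : H₁))
        ∈ Submodule.span ℝ ((fun i => f i) '' {i : Fin n₁ | (i : ℕ) < l}) :=
      fun k => (bb k).2
    have hQ1bb : ∀ k, Q₁ (bb k : H₁) = A (bb k) := fun k => rfl
    have hsv_pos : ∀ k, 0 < sv k := by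
      intro k
      have hnn : sv k = ‖A (bb k)‖ ^ 2 := by
        rw [← hAbd k, real_inner_self_eq_norm_sq]
      rcases lt_or_ge 0 (sv k) with h | h
      · exact h
      · exfalso
        have h0 : ‖A (bb k)‖ ^ 2 = 0 := le_antisymm (hnn ▸ h) (sq_nonneg _)
        have hA0 : A (bb k) = 0 := by
          have := pow_eq_zero_iff (n := 2) (by norm_num) |>.mp h0
          exact norm_eq_zero.mp this
        exact hbbne k (hinj₁ _ (hmem k) (by rw [hQ1bb k, hA0]))
    set e : Fin l → H₂ := fun k => (Real.sqrt (sv k))⁻¹ • (A (bb k)) with he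
    have hsqrt : ∀ k, Real.sqrt (sv k) ≠ 0 :=
      fun k => ne_of_gt (Real.sqrt_pos.mpr (hsv_pos k))
    have heon : Orthonormal ℝ e := by
      rw [orthonormal_iff_ite]
      intro k m
      show (inner ℝ ((Real.sqrt (sv k))⁻¹ • (A (bb k)))
        ((Real.sqrt (sv m))⁻¹ • (A (bb m))) : ℝ) = _
      rw [real_inner_smul_left, real_inner_smul_right, hAb k m]
      by_cases hkm : k = m
      · subst hkm
        have h1 : (if k = k then sv k else 0) = sv k := if_pos rfl
        have h2 : (if k = k then (1 : ℝ) else 0) = 1 := if_pos rfl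
        rw [h1, h2]
        have h3 : Real.sqrt (sv k) * Real.sqrt (sv k) = sv k :=
          Real.mul_self_sqrt (hsv_pos k).le
        calc (Real.sqrt (sv k))⁻¹ * ((Real.sqrt (sv k))⁻¹ * sv k)
            = sv k / (Real.sqrt (sv k) * Real.sqrt (sv k)) := by
              rw [div_eq_mul_inv, mul_inv]; ring
          _ = sv k / sv k := by rw [h3]
          _ = 1 := div_self (ne_of_gt (hsv_pos k))
      · simp only [if_neg hkm]
        ring
    set t : Fin n₂ → ℝ := fun i => ∑ k, (inner ℝ (u i) (e k) : ℝ) ^ 2 with ht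
    have ht0 : ∀ i, 0 ≤ t i := fun i => Finset.sum_nonneg fun k _ => sq_nonneg _
    have ht1 : ∀ i, t i ≤ 1 := by
      intro i
      have h := Orthonormal.sum_inner_products_le (s := univ) (u i) heon
      calc t i = ∑ k, ‖(inner ℝ (e k) (u i) : ℝ)‖ ^ 2 := by
            refine Finset.sum_congr rfl fun k _ => ?_
            rw [real_inner_comm, Real.norm_eq_abs, sq_abs]
        _ ≤ ‖u i‖ ^ 2 := h
        _ = 1 := by rw [u.orthonormal.1 i]; norm_num
    have htsum : ∑ i, t i = (l : ℝ) := by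
      calc ∑ i, t i = ∑ k : Fin l, ∑ i, (inner ℝ (u i) (e k) : ℝ) ^ 2 := Finset.sum_comm
        _ = ∑ _k : Fin l, (1 : ℝ) := by
            refine Finset.sum_congr rfl fun k _ => ?_
            rw [← norm_expand u (e k), heon.1 k]
            norm_num
        _ = (l : ℝ) := by simp
    set μ : Fin n₂ → ℝ := fun i =>
      if lam2 i ≤ lam1 ⟨l - 1, hlpn⟩ + a then lam2 i else lam1 ⟨l - 1, hlpn⟩ with hμ
    have hTr2 : ∑ k, D₂ (e k) (e k) = ∑ i, lam2 i * t i := by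
      calc ∑ k, D₂ (e k) (e k)
          = ∑ k, ∑ i, lam2 i * (inner ℝ (u i) (e k) : ℝ) ^ 2 :=
            Finset.sum_congr rfl fun k _ => quad_expand u D₂ lam2 heig₂ (e k)
        _ = ∑ i, ∑ k, lam2 i * (inner ℝ (u i) (e k) : ℝ) ^ 2 := Finset.sum_comm
        _ = ∑ i, lam2 i * t i := by
            refine Finset.sum_congr rfl fun i _ => ?_
            rw [ht, Finset.mul_sum]
    -- upper bound on trace of D₂ over L
    have hTr2le : ∑ k, D₂ (e k) (e k)
        ≤ (∑ k : Fin l, lam1 (Fin.castLE hln₁ k)) + l * E₂ := by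
      have hrw : ∀ k, D₂ (e k) (e k) = (sv k)⁻¹ * D₂ (A (bb k)) (A (bb k)) := by
        intro k
        show D₂ ((Real.sqrt (sv k))⁻¹ • (A (bb k))) ((Real.sqrt (sv k))⁻¹ • (A (bb k))) = _
        simp only [map_smul, LinearMap.smul_apply, smul_eq_mul]
        rw [show (Real.sqrt (sv k))⁻¹ * ((Real.sqrt (sv k))⁻¹ * D₂ (A (bb k)) (A (bb k)))
            = (Real.sqrt (sv k) * Real.sqrt (sv k))⁻¹ * D₂ (A (bb k)) (A (bb k)) from by
          rw [mul_inv]; ring]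
        rw [Real.mul_self_sqrt (hsv_pos k).le]
      have hE2k : ∀ k, (sv k)⁻¹ * D₂ (A (bb k)) (A (bb k))
          ≤ D₁ (bb k : H₁) (bb k : H₁) + E₂ := by
        intro k
        have h := hE₂ (bb k : H₁) (hmem k) (hbbne k)
        have hnorm1 : ‖(bb k : H₁)‖ ^ 2 = 1 := by rw [hbbnorm k]; norm_num
        have hnQ : ‖Q₁ (bb k : H₁)‖ ^ 2 = sv k := by
          rw [hQ1bb k, ← real_inner_self_eq_norm_sq]
          exact hAbd k
        rw [hnorm1, hnQ, div_one] at h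
        have h3 : D₂ (Q₁ (bb k : H₁)) (Q₁ (bb k : H₁)) / sv k
            ≤ D₁ (bb k : H₁) (bb k : H₁) + E₂ := by linarith
        rw [div_eq_inv_mul] at h3
        rw [← hQ1bb k]
        exact h3
      have htrace : ∑ k, D₁ (bb k : H₁) (bb k : H₁)
          = ∑ k : Fin l, lam1 (Fin.castLE hln₁ k) := by
        have hmemf : ∀ k : Fin l, f (Fin.castLE hln₁ k) ∈ Fsub := fun k => by
          rw [hFsub]
          exact Submodule.subset_span ⟨Fin.castLE hln₁ k, by simpa using k.2, rfl⟩
        set f' : Fin l → Fsub := fun k => ⟨f (Fin.castLE hln₁ k), hmemf k⟩ with hf'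
        have hf'on : Orthonormal ℝ f' := by
          rw [orthonormal_iff_ite]
          intro k m
          rw [Submodule.coe_inner]
          exact orthonormal_iff_ite.mp hv1on k m
        have hf'li : LinearIndependent ℝ f' := hf'on.linearIndependent
        have hspan : ⊤ ≤ Submodule.span ℝ (Set.range f') := by
          have h1 : Module.finrank ℝ (Submodule.span ℝ (Set.range f')) = l := by
            rw [finrank_span_eq_card hf'li, Fintype.card_fin]
          exact (Submodule.eq_top_of_finrank_eq (by rw [h1, hFrank])).ge
        set cF : OrthonormalBasis (Fin l) ℝ Fsub := OrthonormalBasis.mk hf'on hspan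
          with hcF
        have htri := trace_indep D₁ bb cF
        rw [htri]
        refine Finset.sum_congr rfl fun k _ => ?_
        have hcoe : (cF k : H₁) = f (Fin.castLE hln₁ k) := by
          rw [hcF, OrthonormalBasis.coe_mk]
        rw [hcoe, heig₁, real_inner_self_eq_norm_sq, f.orthonormal.1]
        norm_num
      calc ∑ k, D₂ (e k) (e k)
          = ∑ k, (sv k)⁻¹ * D₂ (A (bb k)) (A (bb k)) :=
            Finset.sum_congr rfl fun k _ => hrw k
        _ ≤ ∑ k, (D₁ (bb k : H₁) (bb k : H₁) + E₂) :=
            Finset.sum_le_sum fun k _ => hE2k k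
        _ = (∑ k, D₁ (bb k : H₁) (bb k : H₁)) + l * E₂ := by
            rw [Finset.sum_add_distrib, Finset.sum_const, card_univ, Fintype.card_fin,
              nsmul_eq_mul]
        _ = (∑ k : Fin l, lam1 (Fin.castLE hln₁ k)) + l * E₂ := by rw [htrace]
    -- lower bound on trace of the modified form
    have hTrmu : (∑ k : Fin l, lam1 (Fin.castLE hln₁ k)) - l * max E₁ 0
        ≤ ∑ i, μ i * t i := by
      have hL4 : ∀ (j : ℕ) (hj : j < l),
          lam1 ⟨j, hj.trans_le hln₁⟩ ≤ lam2 ⟨j, hj.trans_le hln₂⟩ + E₁ := fun j hj =>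
        eig_compare hn₁ D₁ D₂ f u lam1 lam2 hmono₁ hmono₂ heig₁ heig₂ l hln₁ hln₂
          Q₂ E₁ hinj₂ hE₁ j hj
      set ν : Fin n₂ → ℝ := fun i => lam1 ⟨min i.1 (l - 1), by omega⟩ - max E₁ 0 with hν
      have hνμ : ∀ i, ν i ≤ μ i := by
        intro i
        have hmlt : min i.1 (l - 1) < l := by omega
        have hmle : min i.1 (l - 1) ≤ i.1 := min_le_left _ _
        simp only [hν, hμ]
        by_cases hgood : lam2 i ≤ lam1 ⟨l - 1, hlpn⟩ + a
        · rw [if_pos hgood]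
          have h2 : lam2 ⟨min i.1 (l - 1), hmlt.trans_le hln₂⟩ ≤ lam2 i :=
            hmono₂ (Fin.le_def.mpr hmle)
          have h3 := hL4 _ hmlt
          have h4 : E₁ ≤ max E₁ 0 := le_max_left _ _
          linarith
        · rw [if_neg hgood]
          have h2 : lam1 ⟨min i.1 (l - 1), by omega⟩ ≤ lam1 ⟨l - 1, hlpn⟩ :=
            hmono₁ (Fin.le_def.mpr (min_le_right _ _))
          have h4 : (0 : ℝ) ≤ max E₁ 0 := le_max_right _ _
          linarith
      set νmax : ℝ := lam1 ⟨l - 1, hlpn⟩ - max E₁ 0 with hνmax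
      have hν_le : ∀ i, ν i ≤ νmax := by
        intro i
        simp only [hν, hνmax]
        have h2 : lam1 ⟨min i.1 (l - 1), by omega⟩ ≤ lam1 ⟨l - 1, hlpn⟩ :=
          hmono₁ (Fin.le_def.mpr (min_le_right _ _))
        linarith
      have hν_eq : ∀ i : Fin n₂, ¬ ((i : ℕ) < l) → ν i = νmax := by
        intro i hi
        simp only [hν, hνmax]
        have hmin : min i.1 (l - 1) = l - 1 := by omega
        have hfe : (⟨min i.1 (l - 1), by omega⟩ : Fin n₁) = ⟨l - 1, hlpn⟩ := Fin.ext hmin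
        rw [hfe]
      set Semb : Fin l ↪ Fin n₂ :=
        ⟨fun k => Fin.castLE hln₂ k, Fin.castLE_injective _⟩ with hSemb
      have hSmap : univ.filter (fun i : Fin n₂ => (i : ℕ) < l)
          = (univ : Finset (Fin l)).map Semb := by
        ext i
        simp only [Finset.mem_filter, Finset.mem_univ, true_and, Finset.mem_map,
          hSemb, Function.Embedding.coeFn_mk]
        constructor
        · intro hi
          exact ⟨⟨i.1, hi⟩, rfl⟩
        · rintro ⟨k, -, rfl⟩
          exact k.2

      have hScard : (univ.filter (fun i : Fin n₂ => (i : ℕ) < l)).card = l := by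
        rw [hSmap, Finset.card_map, Finset.card_univ, Fintype.card_fin]
      have hsum_nu : ∑ i ∈ univ.filter (fun i : Fin n₂ => (i : ℕ) < l), ν i
          = (∑ k : Fin l, lam1 (Fin.castLE hln₁ k)) - l * max E₁ 0 := by
        rw [hSmap, Finset.sum_map]
        have hterm : ∀ k : Fin l, ν (Semb k) = lam1 (Fin.castLE hln₁ k) - max E₁ 0 := by
          intro k
          simp only [hν, hSemb, Function.Embedding.coeFn_mk]
          have hmin : min ((Fin.castLE hln₂ k) : ℕ) (l - 1) = (k : ℕ) := by
            have := k.2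
            simp only [Fin.coe_castLE]
            omega
          have hfe : (⟨min ((Fin.castLE hln₂ k) : ℕ) (l - 1), by omega⟩ : Fin n₁)
              = Fin.castLE hln₁ k := Fin.ext hmin
          rw [hfe]
        rw [Finset.sum_congr rfl fun k _ => hterm k, Finset.sum_sub_distrib,
          Finset.sum_const, Finset.card_univ, Fintype.card_fin, nsmul_eq_mul]
      have h1 : ∑ i ∈ univ.filter (fun i : Fin n₂ => (i : ℕ) < l), (ν i - νmax)
          ≤ ∑ i, (ν i - νmax) * t i := by
        rw [← Finset.sum_filter_add_sum_filter_not univ (fun i : Fin n₂ => (i : ℕ) < l)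
          (fun i => (ν i - νmax) * t i)]
        have h2 : ∑ i ∈ univ.filter (fun i : Fin n₂ => ¬ ((i : ℕ) < l)),
            (ν i - νmax) * t i = 0 := by
          refine Finset.sum_eq_zero fun i hi => ?_
          rw [hν_eq i (Finset.mem_filter.mp hi).2, sub_self, zero_mul]
        rw [h2, add_zero]
        refine Finset.sum_le_sum fun i _ => ?_
        nlinarith [mul_nonneg (sub_nonneg.mpr (hν_le i)) (sub_nonneg.mpr (ht1 i)),
          hν_le i, ht1 i]
      have hsums : ∑ i, (ν i - νmax) * t i = (∑ i, ν i * t i) - νmax * (l : ℝ) := by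
        rw [← htsum, Finset.mul_sum, ← Finset.sum_sub_distrib]
        exact Finset.sum_congr rfl fun i _ => by ring
      have hS2 : ∑ i ∈ univ.filter (fun i : Fin n₂ => (i : ℕ) < l), (ν i - νmax)
          = (∑ i ∈ univ.filter (fun i : Fin n₂ => (i : ℕ) < l), ν i) - l * νmax := by
        rw [Finset.sum_sub_distrib, Finset.sum_const, hScard, nsmul_eq_mul]
      have h5 : ∑ i, ν i * t i ≤ ∑ i, μ i * t i :=
        Finset.sum_le_sum fun i _ => mul_le_mul_of_nonneg_right (hνμ i) (ht0 i)
      rw [hsums, hS2, hsum_nu] at h1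
      linarith
    -- Cauchy-Schwarz pointwise bound
    have hCS : ∀ i, c i ^ 2 ≤ ‖w‖ ^ 2 * t i := by
      set r' : Fin l → ℝ :=
        fun k => (inner ℝ (bb k) (⟨g, hg⟩ : Fsub) : ℝ) * Real.sqrt (sv k) with hr'
      have hgrep := bb.sum_repr' (⟨g, hg⟩ : Fsub)
      have hwrep : w = ∑ k, r' k • e k := by
        have hA := congrArg A hgrep
        rw [map_sum] at hA
        calc w = A (⟨g, hg⟩ : Fsub) := rfl
          _ = ∑ k, (inner ℝ (bb k) (⟨g, hg⟩ : Fsub) : ℝ) • A (bb k) := by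
              rw [← hA]
              exact Finset.sum_congr rfl fun k _ => map_smul A _ _
          _ = ∑ k, r' k • e k := by
              refine Finset.sum_congr rfl fun k _ => ?_
              show _ = r' k • ((Real.sqrt (sv k))⁻¹ • (A (bb k)))
              rw [smul_smul, hr']
              congr 1
              rw [mul_assoc, mul_inv_cancel₀ (hsqrt k), mul_one]
      have hwnorm2 : ‖w‖ ^ 2 = ∑ k, r' k ^ 2 := by
        rw [hwrep, ← real_inner_self_eq_norm_sq,
          Orthonormal.inner_sum heon r' r' univ]
        exact Finset.sum_congr rfl fun k _ => by simp [sq]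
      intro i
      have hc2 : c i = ∑ k, r' k * (inner ℝ (u i) (e k) : ℝ) := by
        show (inner ℝ (u i) w : ℝ) = _
        rw [hwrep, inner_sum]
        exact Finset.sum_congr rfl fun k _ => real_inner_smul_right _ _ _
      rw [hc2, hwnorm2]
      exact sum_mul_sq_le_sq_mul_sq univ r' (fun k => (inner ℝ (u i) (e k) : ℝ))
    -- assemble
    have hstep : ∑ i ∈ Bad, (lam2 i - lam1 ⟨l - 1, hlpn⟩) * c i ^ 2
        = ∑ i, (lam2 i - μ i) * c i ^ 2 := by
      rw [← Finset.sum_filter_add_sum_filter_not univ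
        (fun i => lam2 i ≤ lam1 ⟨l - 1, hlpn⟩ + a) (fun i => (lam2 i - μ i) * c i ^ 2)]
      have hgood0 : ∑ i ∈ univ.filter (fun i => lam2 i ≤ lam1 ⟨l - 1, hlpn⟩ + a),
          (lam2 i - μ i) * c i ^ 2 = 0 := by
        refine Finset.sum_eq_zero fun i hi => ?_
        have := (Finset.mem_filter.mp hi).2
        simp only [hμ, if_pos this]
        ring
      rw [hgood0, zero_add]
      refine Finset.sum_congr rfl fun i hi => ?_
      have := (Finset.mem_filter.mp hi).2
      simp only [hμ, if_neg this]
    have hfac : ∀ i, 0 ≤ lam2 i - μ i := by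
      intro i
      simp only [hμ]
      by_cases h : lam2 i ≤ lam1 ⟨l - 1, hlpn⟩ + a
      · rw [if_pos h]; simp
      · rw [if_neg h]
        push_neg at h
        linarith
    calc ∑ i ∈ Bad, (lam2 i - lam1 ⟨l - 1, hlpn⟩) * c i ^ 2
        = ∑ i, (lam2 i - μ i) * c i ^ 2 := hstep
      _ ≤ ∑ i, (lam2 i - μ i) * (‖w‖ ^ 2 * t i) :=
          Finset.sum_le_sum fun i _ => mul_le_mul_of_nonneg_left (hCS i) (hfac i)
      _ = ‖w‖ ^ 2 * ((∑ i, lam2 i * t i) - (∑ i, μ i * t i)) := by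
          rw [mul_sub, Finset.mul_sum, Finset.mul_sum, ← Finset.sum_sub_distrib]
          exact Finset.sum_congr rfl fun i _ => by ring
      _ ≤ ‖w‖ ^ 2 * (((∑ k : Fin l, lam1 (Fin.castLE hln₁ k)) + l * E₂)
            - ((∑ k : Fin l, lam1 (Fin.castLE hln₁ k)) - l * max E₁ 0)) := by
          apply mul_le_mul_of_nonneg_left _ (sq_nonneg ‖w‖)
          have := hTr2 ▸ hTr2le
          exact sub_le_sub this hTrmu
      _ = (l : ℝ) * (max E₁ 0 + E₂) * ‖w‖ ^ 2 := by ring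
  have hBadge : ∀ i ∈ Bad, lam1 ⟨l - 1, hlpn⟩ + a < lam2 i := by
    intro i hi
    have := (Finset.mem_filter.mp hi).2
    exact lt_of_not_ge this
  have hsum1 : a * ∑ i ∈ Bad, c i ^ 2 ≤ ∑ i ∈ Bad, (lam2 i - lam1 ⟨l - 1, hlpn⟩) * c i ^ 2 := by
    rw [Finset.mul_sum]
    refine Finset.sum_le_sum fun i hi => ?_
    have h1 := hBadge i hi
    nlinarith [sq_nonneg (c i)]
  have hl0 : 0 ≤ lam1 ⟨l - 1, hlpn⟩ := by
    have h := heig₁ ⟨l - 1, hlpn⟩ (f ⟨l - 1, hlpn⟩)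
    have hone : (inner ℝ (f ⟨l - 1, hlpn⟩) (f ⟨l - 1, hlpn⟩) : ℝ) = 1 := by
      rw [real_inner_self_eq_norm_sq, f.orthonormal.1]; norm_num
    have hp := hpsd₁ (f ⟨l - 1, hlpn⟩)
    rw [h, hone, mul_one] at hp
    exact hp
  have hNB : 0 ≤ ∑ i ∈ Bad, c i ^ 2 := Finset.sum_nonneg fun i _ => sq_nonneg _
  constructor
  · show ‖w - P w‖ ^ 2 ≤ (l : ℝ) / a * (max E₁ 0 + E₂) * ‖w‖ ^ 2
    rw [hBnorm]
    rw [div_mul_eq_mul_div, div_mul_eq_mul_div, le_div_iff₀ ha]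
    calc (∑ i ∈ Bad, c i ^ 2) * a = a * ∑ i ∈ Bad, c i ^ 2 := by ring
      _ ≤ ∑ i ∈ Bad, (lam2 i - lam1 ⟨l - 1, hlpn⟩) * c i ^ 2 := hsum1
      _ ≤ (l : ℝ) * (max E₁ 0 + E₂) * ‖w‖ ^ 2 := key
  · show D₂ (w - P w) (w - P w)
      ≤ (lam1 ⟨l - 1, hlpn⟩ + a) / a * l * (max E₁ 0 + E₂) * ‖w‖ ^ 2
    have hD : D₂ (w - P w) (w - P w)
        = (∑ i ∈ Bad, (lam2 i - lam1 ⟨l - 1, hlpn⟩) * c i ^ 2)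
          + lam1 ⟨l - 1, hlpn⟩ * ∑ i ∈ Bad, c i ^ 2 := by
      rw [hBD, Finset.mul_sum, ← Finset.sum_add_distrib]
      exact Finset.sum_congr rfl fun i _ => by ring
    have hsc : lam1 ⟨l - 1, hlpn⟩ * ∑ i ∈ Bad, c i ^ 2
        ≤ lam1 ⟨l - 1, hlpn⟩ / a * ((l : ℝ) * (max E₁ 0 + E₂) * ‖w‖ ^ 2) := by
      rw [div_mul_eq_mul_div, le_div_iff₀ ha]
      calc lam1 ⟨l - 1, hlpn⟩ * (∑ i ∈ Bad, c i ^ 2) * a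
          = lam1 ⟨l - 1, hlpn⟩ * (a * ∑ i ∈ Bad, c i ^ 2) := by ring
        _ ≤ lam1 ⟨l - 1, hlpn⟩ * ((l : ℝ) * (max E₁ 0 + E₂) * ‖w‖ ^ 2) :=
            mul_le_mul_of_nonneg_left (le_trans hsum1 key) hl0
    have heq : (lam1 ⟨l - 1, hlpn⟩ + a) / a * l * (max E₁ 0 + E₂) * ‖w‖ ^ 2
        = (l : ℝ) * (max E₁ 0 + E₂) * ‖w‖ ^ 2
          + lam1 ⟨l - 1, hlpn⟩ / a * ((l : ℝ) * (max E₁ 0 + E₂) * ‖w‖ ^ 2) := by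
      field_simp
      ring
    rw [hD, heq]
    exact add_le_add key hsc
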